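/- In the down-up algebra D(0,1), the unital k-subalgebra generated by the four elements (du)², (ud)², d⁴ and u² is isomorphic as a k-algebra to the commutative polynomial quotient k[x,y,z,t]/(xy − zt²); in particular this subalgebra is a commutative complete intersection. -/

import Mathlib

open FreeAlgebra

noncomputable section

/-- The defining relations of the down-up algebra `D(a,b)` (with `u = ι k 0`, `d = ι k 1`). -/
inductive DownUpRel (k : Type*) [CommRing k] (a b : k) :
    FreeAlgebra k (Fin 2) → FreeAlgebra k (Fin 2) → Prop
  | rel1 : DownUpRel k a b (ι k 0 * ι k 0 * ι k 1)
      (a • (ι k 0 * ι k 1 * ι k 0) + b • (ι k 1 * ι k 0 * ι k 0))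
  | rel2 : DownUpRel k a b (ι k 0 * ι k 1 * ι k 1)
      (a • (ι k 1 * ι k 0 * ι k 1) + b • (ι k 1 * ι k 1 * ι k 0))

/-- The down-up algebra `D(a,b)`. -/
abbrev DownUp (k : Type*) [CommRing k] (a b : k) : Type _ :=
  RingQuot (DownUpRel k a b)

/-- The generator `u` of the down-up algebra. -/
def DownUp.u (k : Type*) [CommRing k] (a b : k) : DownUp k a b :=
  RingQuot.mkAlgHom k (DownUpRel k a b) (ι k 0)

/-- The generator `d` of the down-up algebra. -/
def DownUp.d (k : Type*) [CommRing k] (a b : k) : DownUp k a b :=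
  RingQuot.mkAlgHom k (DownUpRel k a b) (ι k 1)

/-- The image in `D(a,b)` of a word in the free monoid on the generators `u, d`. -/
def DownUp.wordVal (k : Type*) [CommRing k] (a b : k) :
    FreeMonoid (Fin 2) →* DownUp k a b :=
  FreeMonoid.lift fun i => RingQuot.mkAlgHom k (DownUpRel k a b) (ι k i)

/-- The degree-`n` component of the down-up algebra: the `k`-span of the images of
all words of length `n` in `u` and `d`. -/
def DownUp.degComp (k : Type*) [CommRing k] (a b : k) (n : ℕ) :
    Submodule k (DownUp k a b) :=
  Submodule.span k {z | ∃ w : FreeMonoid (Fin 2), w.length = n ∧ DownUp.wordVal k a b w = z}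

/-! ### Auxiliary material for the proof of Statement 17 -/

namespace AuxCI
open MvPolynomial

section Comm
variable {k : Type*} [CommRing k]

/-- exponent transform of the monomial map -/
def T (m : Fin 4 →₀ ℕ) : Fin 3 →₀ ℕ :=
  Finsupp.single 0 (2 * m 0 + 2 * m 2) + Finsupp.single 1 (2 * m 1 + 2 * m 2) +
    Finsupp.single 2 (2 * m 1 + m 3)

lemma T_apply (m : Fin 4 →₀ ℕ) :
    T m 0 = 2 * m 0 + 2 * m 2 ∧ T m 1 = 2 * m 1 + 2 * m 2 ∧ T m 2 = 2 * m 1 + m 3 := by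
  refine ⟨?_, ?_, ?_⟩ <;> simp [T, Finsupp.single_apply]

lemma T_inj {m n : Fin 4 →₀ ℕ} (hm : m 0 = 0 ∨ m 1 = 0) (hn : n 0 = 0 ∨ n 1 = 0)
    (h : T m = T n) : m = n := by
  obtain ⟨a1, a2, a3⟩ := T_apply m
  obtain ⟨b1, b2, b3⟩ := T_apply n
  have e1 : 2 * m 0 + 2 * m 2 = 2 * n 0 + 2 * n 2 := by rw [← a1, ← b1, h]
  have e2 : 2 * m 1 + 2 * m 2 = 2 * n 1 + 2 * n 2 := by rw [← a2, ← b2, h]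
  have e3 : 2 * m 1 + m 3 = 2 * n 1 + n 3 := by rw [← a3, ← b3, h]
  have q0 : m 0 = n 0 := by rcases hm with hm | hm <;> rcases hn with hn | hn <;> omega
  have q1 : m 1 = n 1 := by rcases hm with hm | hm <;> rcases hn with hn | hn <;> omega
  have q2 : m 2 = n 2 := by rcases hm with hm | hm <;> rcases hn with hn | hn <;> omega
  have q3 : m 3 = n 3 := by rcases hm with hm | hm <;> rcases hn with hn | hn <;> omega
  ext i
  fin_cases i
  · exact q0
  · exact q1
  · exact q2
  · exact q3

/-- the values of the "first diagonal entry" character -/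
def chi1v : Fin 4 → MvPolynomial (Fin 3) k :=
  ![X 0 ^ 2, X 1 ^ 2 * X 2 ^ 2, X 0 ^ 2 * X 1 ^ 2, X 2]

/-- the values of the "second diagonal entry" character -/
def chi2v : Fin 4 → MvPolynomial (Fin 3) k :=
  ![X 1 ^ 2 * X 2 ^ 2, X 0 ^ 2, X 0 ^ 2 * X 1 ^ 2, X 2]

lemma chi1_monomial (m : Fin 4 →₀ ℕ) (c : k) :
    aeval (chi1v (k := k)) (monomial m c) = monomial (T m) c := by
  rw [aeval_monomial, monomial_eq]
  rw [Finsupp.prod_fintype _ _ (fun i => pow_zero _),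
    Finsupp.prod_fintype _ _ (fun i => pow_zero _)]
  rw [Fin.prod_univ_four, Fin.prod_univ_three]
  obtain ⟨a1, a2, a3⟩ := T_apply m
  rw [a1, a2, a3]
  simp only [chi1v, Matrix.cons_val_zero, Matrix.cons_val_one, Matrix.head_cons,
    Matrix.cons_val_two, Matrix.tail_cons, Matrix.cons_val_three, algebraMap_eq]
  ring

lemma chi1_reduced_eq_zero {r : MvPolynomial (Fin 4) k}
    (hr : ∀ m ∈ r.support, m 0 = 0 ∨ m 1 = 0) (h : aeval (chi1v (k := k)) r = 0) :
    r = 0 := by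
  by_contra hne
  obtain ⟨m0, hm0⟩ := support_nonempty.2 hne
  have hsum : aeval (chi1v (k := k)) r = ∑ m ∈ r.support, monomial (T m) (coeff m r) := by
    conv_lhs => rw [r.as_sum]
    rw [map_sum]
    exact Finset.sum_congr rfl fun m _ => chi1_monomial m _
  have hco : coeff (T m0) (aeval (chi1v (k := k)) r) = coeff m0 r := by
    rw [hsum, coeff_sum]
    rw [Finset.sum_eq_single_of_mem m0 hm0]
    · rw [coeff_monomial, if_pos rfl]
    · intro m hm hne'
      rw [coeff_monomial, if_neg]
      intro hT
      exact hne' (T_inj (hr m hm) (hr m0 hm0) hT)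
  rw [h, coeff_zero] at hco
  exact (mem_support_iff.1 hm0) hco.symm

/-- the reduction of a monomial exponent modulo `xy - zt²` -/
def red (m : Fin 4 →₀ ℕ) : Fin 4 →₀ ℕ :=
  (m - Finsupp.single 0 (min (m 0) (m 1)) - Finsupp.single 1 (min (m 0) (m 1))) +
    Finsupp.single 2 (min (m 0) (m 1)) + Finsupp.single 3 (2 * min (m 0) (m 1))

lemma red_apply (m : Fin 4 →₀ ℕ) :
    red m 0 = m 0 - min (m 0) (m 1) ∧ red m 1 = m 1 - min (m 0) (m 1) ∧
    red m 2 = m 2 + min (m 0) (m 1) ∧ red m 3 = m 3 + 2 * min (m 0) (m 1) := by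
  refine ⟨?_, ?_, ?_, ?_⟩ <;>
    simp [red, Finsupp.single_apply, Finsupp.sub_apply]

lemma red_reduced (m : Fin 4 →₀ ℕ) : red m 0 = 0 ∨ red m 1 = 0 := by
  obtain ⟨a1, a2, _, _⟩ := red_apply m
  omega

lemma monomial_sub_red_mem (m : Fin 4 →₀ ℕ) (c : k) :
    monomial m c - monomial (red m) c ∈
      Ideal.span ({X 0 * X 1 - X 2 * X 3 ^ 2} : Set (MvPolynomial (Fin 4) k)) := by
  set μ := min (m 0) (m 1) with hμ
  set m' := m - Finsupp.single 0 μ - Finsupp.single 1 μ with hm'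
  have pow1 : ((X 0 * X 1 : MvPolynomial (Fin 4) k)) ^ μ =
      monomial (Finsupp.single 0 μ + Finsupp.single 1 μ) (1 : k) := by
    rw [mul_pow, X_pow_eq_monomial, X_pow_eq_monomial, monomial_mul, one_mul]
  have pow2 : ((X 2 * X 3 ^ 2 : MvPolynomial (Fin 4) k)) ^ μ =
      monomial (Finsupp.single 2 μ + Finsupp.single 3 (2 * μ)) (1 : k) := by
    rw [mul_pow, ← pow_mul, X_pow_eq_monomial, X_pow_eq_monomial, monomial_mul, one_mul,
      mul_comm 2 μ]
  have hexp : m' + (Finsupp.single 0 μ + Finsupp.single 1 μ) = m := by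
    have h0 : μ ≤ m 0 := min_le_left _ _
    have h1' : μ ≤ m 1 := min_le_right _ _
    ext i
    fin_cases i <;>
      simp [hm', Finsupp.single_apply, Finsupp.sub_apply, Finsupp.tsub_apply] <;> omega
  have h1 : monomial m c = monomial m' c * ((X 0 * X 1 : MvPolynomial (Fin 4) k)) ^ μ := by
    rw [pow1, monomial_mul, mul_one, hexp]
  have h2 : monomial (red m) c = monomial m' c * ((X 2 * X 3 ^ 2 : MvPolynomial (Fin 4) k)) ^ μ := by
    rw [pow2, monomial_mul, mul_one]
    rw [red, ← hμ, ← hm', add_assoc]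
  rw [h1, h2, ← mul_sub]
  refine Ideal.mul_mem_left _ _ ?_
  rw [Ideal.mem_span_singleton]
  exact sub_dvd_pow_sub_pow _ _ μ

lemma exists_reduced (f : MvPolynomial (Fin 4) k) :
    ∃ r, f - r ∈ Ideal.span ({X 0 * X 1 - X 2 * X 3 ^ 2} : Set (MvPolynomial (Fin 4) k)) ∧
      ∀ m ∈ r.support, m 0 = 0 ∨ m 1 = 0 := by
  refine ⟨∑ m ∈ f.support, monomial (red m) (coeff m f), ?_, ?_⟩
  · have hf : f - ∑ m ∈ f.support, monomial (red m) (coeff m f) =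
        ∑ m ∈ f.support, (monomial m (coeff m f) - monomial (red m) (coeff m f)) := by
      rw [Finset.sum_sub_distrib, ← as_sum]
    rw [hf]
    exact Ideal.sum_mem _ fun m _ => monomial_sub_red_mem m _
  · intro m hm
    by_contra hc
    push_neg at hc
    have : coeff m (∑ m' ∈ f.support, monomial (red m') (coeff m' f)) = 0 := by
      rw [coeff_sum]
      refine Finset.sum_eq_zero fun m' _ => ?_
      rw [coeff_monomial, if_neg]
      intro he
      rcases red_reduced m' with h | h <;> rw [he] at h <;> omega
    exact (mem_support_iff.1 hm) this

lemma mem_span_of_chi1_zero {f : MvPolynomial (Fin 4) k}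
    (h : aeval (chi1v (k := k)) f = 0) :
    f ∈ Ideal.span ({X 0 * X 1 - X 2 * X 3 ^ 2} : Set (MvPolynomial (Fin 4) k)) := by
  obtain ⟨r, hfr, hred⟩ := exists_reduced f
  have hgen : aeval (chi1v (k := k)) (X 0 * X 1 - X 2 * X 3 ^ 2 : MvPolynomial (Fin 4) k) = 0 := by
    simp [chi1v]
    ring
  have hI : aeval (chi1v (k := k)) (f - r) = 0 := by
    rw [Ideal.mem_span_singleton] at hfr
    obtain ⟨q, hq⟩ := hfr
    rw [hq, map_mul, hgen, zero_mul]
  have hr0 : aeval (chi1v (k := k)) r = 0 := by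
    have hr' : r = f - (f - r) := by ring
    rw [hr', map_sub, h, hI, sub_zero]
  have : r = 0 := chi1_reduced_eq_zero hred hr0
  rw [this, sub_zero] at hfr
  exact hfr

end Comm

/-! ### The down-up algebra side -/

section DU
variable (k : Type*) [CommRing k]

local notation "uu" => DownUp.u k 0 1
local notation "dd" => DownUp.d k 0 1

theorem h1 : uu * uu * dd = dd * (uu * uu) := by
  have := RingQuot.mkAlgHom_rel k (DownUpRel.rel1 (k := k) (a := 0) (b := 1))
  simp only [map_mul, map_add, map_smul, zero_smul, one_smul, zero_add] at this
  rw [DownUp.u, DownUp.d, this, mul_assoc]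

theorem h2 : uu * (dd * dd) = dd * dd * uu := by
  have := RingQuot.mkAlgHom_rel k (DownUpRel.rel2 (k := k) (a := 0) (b := 1))
  simp only [map_mul, map_add, map_smul, zero_smul, one_smul, zero_add] at this
  rw [DownUp.u, DownUp.d, ← mul_assoc, this]

theorem hkey : (dd * uu)^2 * (uu * dd)^2 = dd^4 * (uu^2)^2 := by
  have H1 : ∀ x : DownUp k 0 1, uu * (uu * (dd * x)) = dd * (uu * (uu * x)) := by
    intro x
    calc uu * (uu * (dd * x)) = (uu * uu * dd) * x := by simp only [mul_assoc]
    _ = (dd * (uu * uu)) * x := by rw [h1]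
    _ = dd * (uu * (uu * x)) := by simp only [mul_assoc]
  have H2 : ∀ x : DownUp k 0 1, uu * (dd * (dd * x)) = dd * (dd * (uu * x)) := by
    intro x
    calc uu * (dd * (dd * x)) = (uu * (dd * dd)) * x := by simp only [mul_assoc]
    _ = (dd * dd * uu) * x := by rw [h2]
    _ = dd * (dd * (uu * x)) := by simp only [mul_assoc]
  have h1r : uu * (uu * dd) = dd * (uu * uu) := by rw [← h1, mul_assoc]
  simp only [pow_succ, pow_zero, one_mul, mul_assoc]
  rw [H1, H2, h1r, H1]

/-- `u²` is central. -/
theorem u2_central : ∀ x : DownUp k 0 1, (uu * uu) * x = x * (uu * uu) := by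
  have key : ∀ y : FreeAlgebra k (Fin 2),
      Commute (uu * uu) (RingQuot.mkAlgHom k (DownUpRel k 0 1) y) := by
    intro y
    induction y using FreeAlgebra.induction with
    | grade0 r =>
        rw [AlgHom.commutes]
        exact (Algebra.commutes r (uu * uu)).symm
    | grade1 i =>
        fin_cases i
        · exact (Commute.refl uu).mul_left (Commute.refl uu)
        · exact h1 k
    | mul a b ha hb => rw [map_mul]; exact ha.mul_right hb
    | add a b ha hb => rw [map_add]; exact ha.add_right hb
  intro x
  obtain ⟨y, rfl⟩ := RingQuot.mkAlgHom_surjective k (DownUpRel k 0 1) x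
  exact key y

/-- `d²` is central. -/
theorem d2_central : ∀ x : DownUp k 0 1, (dd * dd) * x = x * (dd * dd) := by
  have key : ∀ y : FreeAlgebra k (Fin 2),
      Commute (dd * dd) (RingQuot.mkAlgHom k (DownUpRel k 0 1) y) := by
    intro y
    induction y using FreeAlgebra.induction with
    | grade0 r =>
        rw [AlgHom.commutes]
        exact (Algebra.commutes r (dd * dd)).symm
    | grade1 i =>
        fin_cases i
        · exact (h2 k).symm
        · exact (Commute.refl dd).mul_left (Commute.refl dd)
    | mul a b ha hb => rw [map_mul]; exact ha.mul_right hb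
    | add a b ha hb => rw [map_add]; exact ha.add_right hb
  intro x
  obtain ⟨y, rfl⟩ := RingQuot.mkAlgHom_surjective k (DownUpRel k 0 1) x
  exact key y

theorem hAB : Commute ((dd * uu)^2) ((uu * dd)^2) := by
  have e1 : (dd * uu) * (uu * dd) = (uu * uu) * (dd * dd) := by
    calc (dd * uu) * (uu * dd) = dd * ((uu * uu) * dd) := by simp only [mul_assoc]
    _ = dd * (dd * (uu * uu)) := by rw [u2_central]
    _ = (dd * dd) * (uu * uu) := by simp only [mul_assoc]
    _ = (uu * uu) * (dd * dd) := by rw [u2_central]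
  have e2 : (uu * dd) * (dd * uu) = (uu * uu) * (dd * dd) := by
    calc (uu * dd) * (dd * uu) = uu * ((dd * dd) * uu) := by simp only [mul_assoc]
    _ = uu * (uu * (dd * dd)) := by rw [d2_central]
    _ = (uu * uu) * (dd * dd) := by simp only [mul_assoc]
  exact Commute.pow_pow (e1.trans e2.symm) 2 2

theorem u2_central' : ∀ x : DownUp k 0 1, uu^2 * x = x * uu^2 := by
  intro x; rw [pow_two]; exact u2_central k x

theorem d4_central : ∀ x : DownUp k 0 1, dd^4 * x = x * dd^4 := by
  intro x
  have h4 : dd^4 = (dd * dd) * (dd * dd) := by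
    rw [pow_succ, pow_succ, pow_two, mul_assoc]
  have c : Commute (dd * dd) x := d2_central k x
  rw [h4]
  exact (c.mul_left c).eq

/-- the generator set of Statement 17 -/
def genSet : Set (DownUp k 0 1) :=
  {(dd * uu) ^ 2, (uu * dd) ^ 2, dd ^ 4, uu ^ 2}

theorem genSet_comm : ∀ a ∈ genSet k, ∀ b ∈ genSet k, a * b = b * a := by
  intro a ha b hb
  simp only [genSet, Set.mem_insert_iff, Set.mem_singleton_iff] at ha hb
  rcases ha with rfl | rfl | rfl | rfl <;> rcases hb with rfl | rfl | rfl | rfl <;>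
    first
      | rfl
      | exact hAB k
      | exact (hAB k).symm
      | exact d4_central k _
      | exact (d4_central k _).symm
      | exact u2_central' k _
      | exact (u2_central' k _).symm

open MvPolynomial in
/-- the matrix `u` -/
def Umat : Matrix (Fin 2) (Fin 2) (MvPolynomial (Fin 3) k) := !![0, X 2; 1, 0]

open MvPolynomial in
/-- the matrix `d` -/
def Dmat : Matrix (Fin 2) (Fin 2) (MvPolynomial (Fin 3) k) := !![0, X 0; X 1, 0]

/-- the lift of the matrix representation to the free algebra -/
def Fmat : FreeAlgebra k (Fin 2) →ₐ[k] Matrix (Fin 2) (Fin 2) (MvPolynomial (Fin 3) k) :=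
  FreeAlgebra.lift k ![Umat k, Dmat k]

theorem Fmat_rel : ∀ ⦃x y⦄, DownUpRel k 0 1 x y → Fmat k x = Fmat k y := by
  intro x y h
  induction h with
  | rel1 =>
      simp only [map_mul, map_add, map_smul, zero_smul, one_smul, zero_add, Fmat,
        FreeAlgebra.lift_ι_apply, Matrix.cons_val_zero, Matrix.cons_val_one, Matrix.head_cons]
      ext i j
      fin_cases i <;> fin_cases j <;>
        simp [Umat, Dmat, Matrix.mul_apply, Fin.sum_univ_two] <;> ring
  | rel2 =>
      simp only [map_mul, map_add, map_smul, zero_smul, one_smul, zero_add, Fmat,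
        FreeAlgebra.lift_ι_apply, Matrix.cons_val_zero, Matrix.cons_val_one, Matrix.head_cons]
      ext i j
      fin_cases i <;> fin_cases j <;>
        simp [Umat, Dmat, Matrix.mul_apply, Fin.sum_univ_two] <;> ring

/-- the 2-dimensional representation of `D(0,1)` over `k[s,v,w]` -/
def psi : DownUp k 0 1 →ₐ[k] Matrix (Fin 2) (Fin 2) (MvPolynomial (Fin 3) k) :=
  RingQuot.liftAlgHom k ⟨Fmat k, Fmat_rel k⟩

theorem psi_u : psi k uu = Umat k := by
  rw [DownUp.u, psi, RingQuot.liftAlgHom_mkAlgHom_apply, Fmat, FreeAlgebra.lift_ι_apply]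
  rfl

theorem psi_d : psi k dd = Dmat k := by
  rw [DownUp.d, psi, RingQuot.liftAlgHom_mkAlgHom_apply, Fmat, FreeAlgebra.lift_ι_apply]
  rfl

theorem commAB : Commute ((dd * uu)^2) ((uu * dd)^2) := hAB k
theorem commAC : Commute ((dd * uu)^2) (dd^4) := (d4_central k _).symm
theorem commAE : Commute ((dd * uu)^2) (uu^2) := (u2_central' k _).symm
theorem commBC : Commute ((uu * dd)^2) (dd^4) := (d4_central k _).symm
theorem commBE : Commute ((uu * dd)^2) (uu^2) := (u2_central' k _).symm
theorem commCE : Commute (dd^4) (uu^2) := (u2_central' k _).symm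

/-- the monoid homomorphism sending an exponent vector to the corresponding product of
the four generators -/
def word : Multiplicative (Fin 4 →₀ ℕ) →* DownUp k 0 1 where
  toFun m := ((dd * uu)^2)^((Multiplicative.toAdd m) 0) *
    (((uu * dd)^2)^((Multiplicative.toAdd m) 1) *
      ((dd^4)^((Multiplicative.toAdd m) 2) * ((uu^2)^((Multiplicative.toAdd m) 3))))
  map_one' := by
    simp
  map_mul' m n := by
    simp only [toAdd_mul, Finsupp.add_apply, pow_add]
    rw [((commCE k).pow_pow _ _).mul_mul_mul_comm,
      (((commBC k).pow_pow _ _).mul_right ((commBE k).pow_pow _ _)).mul_mul_mul_comm,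
      (((commAB k).pow_pow _ _).mul_right
        (((commAC k).pow_pow _ _).mul_right ((commAE k).pow_pow _ _))).mul_mul_mul_comm]

open MvPolynomial in
/-- the algebra homomorphism from the polynomial ring onto the subalgebra of Statement 17 -/
def Phi : MvPolynomial (Fin 4) k →ₐ[k] DownUp k 0 1 :=
  AddMonoidAlgebra.lift k (DownUp k 0 1) (Fin 4 →₀ ℕ) (word k)

open MvPolynomial in
theorem Phi_X (i : Fin 4) :
    Phi k (X i) = ![(dd * uu)^2, (uu * dd)^2, dd^4, uu^2] i := by
  have hX : (X i : MvPolynomial (Fin 4) k) =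
      AddMonoidAlgebra.single (Finsupp.single i 1) (1 : k) := by
    rw [X, ← single_eq_monomial]
  rw [Phi, hX]
  refine Eq.trans (AddMonoidAlgebra.lift_single (word k) (Finsupp.single i 1) 1) ?_
  rw [one_smul]
  fin_cases i <;>
    simp [word, Finsupp.single_apply]

open MvPolynomial in
theorem Heq : (psi k).comp (Phi k) =
    (Matrix.diagonalAlgHom k).comp
      (Pi.algHom k _ ![aeval (chi1v (k := k)), aeval (chi2v (k := k))]) := by
  apply MvPolynomial.algHom_ext
  intro i
  rw [AlgHom.comp_apply, AlgHom.comp_apply, Phi_X]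
  fin_cases i <;>
    · ext a b
      fin_cases a <;> fin_cases b <;>
        simp [psi_u, psi_d, Umat, Dmat, chi1v, chi2v, Matrix.mul_apply, Fin.sum_univ_two,
          pow_succ, Matrix.diagonal, Pi.algHom_apply, Matrix.diagonalAlgHom_apply] <;>
        ring

open MvPolynomial in
theorem ker_Phi : RingHom.ker (Phi k) =
    Ideal.span ({X 0 * X 1 - X 2 * X 3 ^ 2} : Set (MvPolynomial (Fin 4) k)) := by
  apply le_antisymm
  · intro p hp
    rw [RingHom.mem_ker] at hp
    have hpsi : (psi k) (Phi k p) = 0 := by rw [hp, map_zero]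
    have hd := DFunLike.congr_fun (Heq k) p
    simp only [AlgHom.comp_apply] at hd
    rw [hpsi] at hd
    have hent := congrFun (congrFun hd 0) 0
    have hchi : aeval (chi1v (k := k)) p = 0 := by
      simpa [Matrix.diagonalAlgHom_apply, Matrix.diagonal, Pi.algHom_apply] using hent.symm
    exact mem_span_of_chi1_zero hchi
  · rw [Ideal.span_le]
    intro g hg
    rw [Set.mem_singleton_iff] at hg
    subst hg
    rw [SetLike.mem_coe, RingHom.mem_ker, map_sub, map_mul, map_mul, map_pow,
      Phi_X, Phi_X, Phi_X, Phi_X]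
    simp only [Matrix.cons_val_zero, Matrix.cons_val_one, Matrix.head_cons, Matrix.cons_val_two,
      Matrix.tail_cons, Matrix.cons_val_three]
    rw [sub_eq_zero]
    exact hkey k

open MvPolynomial in
theorem range_Phi : (Phi k).range = Algebra.adjoin k (genSet k) := by
  apply le_antisymm
  · rintro x ⟨p, rfl⟩
    induction p using MvPolynomial.induction_on with
    | C r =>
        show (Phi k) (C r) ∈ _
        rw [MvPolynomial.algHom_C]
        exact Subalgebra.algebraMap_mem _ r
    | add p q hp hq => rw [map_add]; exact add_mem hp hq
    | mul_X p i hp =>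
        rw [map_mul]
        refine mul_mem hp (Algebra.subset_adjoin ?_)
        show (Phi k) (X i) ∈ _
        rw [Phi_X]
        fin_cases i <;> simp [genSet]
  · apply Algebra.adjoin_le
    intro x hx
    simp only [genSet, Set.mem_insert_iff, Set.mem_singleton_iff] at hx
    rcases hx with rfl | rfl | rfl | rfl
    · exact ⟨X 0, by show (Phi k) (X 0) = _; rw [Phi_X]; simp⟩
    · exact ⟨X 1, by show (Phi k) (X 1) = _; rw [Phi_X]; simp⟩
    · exact ⟨X 2, by show (Phi k) (X 2) = _; rw [Phi_X]; simp⟩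
    · exact ⟨X 3, by show (Phi k) (X 3) = _; rw [Phi_X]; simp⟩

end DU

end AuxCI

open MvPolynomial in
/-- in `D(0,1)`, the unital `k`-subalgebra generated by
`(du)², (ud)², d⁴, u²` is isomorphic as a `k`-algebra to the commutative complete
intersection `k[x,y,z,t]/(xy − zt²)`. -/
theorem adjoin_iso_complete_intersection
    (k : Type*) [Field k] [IsAlgClosed k] [CharZero k] :
    Nonempty
      ((Algebra.adjoin k
          ({(DownUp.d k 0 1 * DownUp.u k 0 1) ^ 2, (DownUp.u k 0 1 * DownUp.d k 0 1) ^ 2,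
            DownUp.d k 0 1 ^ 4, DownUp.u k 0 1 ^ 2} : Set (DownUp k 0 1))) ≃ₐ[k]
        (MvPolynomial (Fin 4) k ⧸
          Ideal.span ({X 0 * X 1 - X 2 * X 3 ^ 2} : Set (MvPolynomial (Fin 4) k)))) := by
  show Nonempty ((Algebra.adjoin k (AuxCI.genSet k)) ≃ₐ[k] _)
  exact ⟨(Subalgebra.equivOfEq _ _ (AuxCI.range_Phi k).symm).trans
    ((Ideal.quotientKerEquivRange (AuxCI.Phi k)).symm.trans
      (Ideal.quotientEquivAlgOfEq k (AuxCI.ker_Phi k)))⟩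

end
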